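/- Non-constructivity of Boolos' proof (diagonal form): suppose ħ : ℕ → ℕ is computable with lim ħ = ∞, (ℓ_j) is a computable sequence with lim_j ħ(ℓ_j) = ∞, and b : ℕ → ℕ is a function with 𝒦(b j) ≥ ħ(ℓ_j) for all j. Then b is not computable. -/

import Mathlib

/-- The standard enumeration of unary partial computable functions. -/
def phi (n : ℕ) : ℕ →. ℕ :=
  Nat.Partrec.Code.eval (Denumerable.ofNat Nat.Partrec.Code n)

/-- `W n` is the domain of the `n`-th partial computable function. -/
def W (n : ℕ) : Set ℕ := {m | (phi n m).Dom}

/-- The diagonal (non-)halting set `K = {n : φ_n(n) is undefined}`. -/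
def K : Set ℕ := {n | n ∉ W n}

/-- A set is recursively enumerable iff it is `W n` for some `n`. -/
def RE (A : Set ℕ) : Prop := ∃ n, A = W n

/-- Kolmogorov–Chaitin complexity: least index `i` with `φ_i(0)↓ = m`. -/
noncomputable def KC (m : ℕ) : ℕ := sInf {i | m ∈ phi i 0}

open Encodable Nat.Partrec in
theorem boolos_nonconstructive (h : ℕ → ℕ) (hcomp : Computable h)
    (htend : Filter.Tendsto h Filter.atTop Filter.atTop)
    (l : ℕ → ℕ) (hl : Computable l)
    (hlt : Filter.Tendsto (fun j => h (l j)) Filter.atTop Filter.atTop)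
    (b : ℕ → ℕ) (hb : ∀ j, h (l j) ≤ KC (b j)) :
    ¬ Computable b := by
  intro hbc
  have hpf : Partrec₂ fun (c : Code) (_ : ℕ) =>
      (Nat.rfind fun j => Part.some (decide (encode c < h (l j)))).map b := by
    have hpred : Computable₂ fun (a : Code × ℕ) (j : ℕ) =>
        decide (encode a.1 < h (l j)) :=
      Primrec.nat_lt.decide.to_comp.comp
        (Computable.encode.comp (Computable.fst.comp Computable.fst))
        (hcomp.comp (hl.comp Computable.snd))
    have hrf : Partrec fun (a : Code × ℕ) =>
        Nat.rfind fun j => Part.some (decide (encode a.1 < h (l j))) :=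
      Partrec.rfind hpred.partrec₂
    exact hrf.map ((hbc.comp Computable.snd).to₂)
  obtain ⟨c, hc⟩ := Nat.Partrec.Code.fixed_point₂ hpf
  have hdom : (Nat.rfind fun j => Part.some (decide (encode c < h (l j)))).Dom := by
    refine Nat.rfind_dom.2 ?_
    obtain ⟨n, hn⟩ := (hlt.eventually (Filter.eventually_gt_atTop (encode c))).exists
    exact ⟨n, by simpa using hn, by intro m _; trivial⟩
  set j := (Nat.rfind fun j => Part.some (decide (encode c < h (l j)))).get hdom with hj
  have hjm : j ∈ Nat.rfind fun j => Part.some (decide (encode c < h (l j))) :=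
    Part.get_mem hdom
  have hlt' : encode c < h (l j) := by
    have := Nat.rfind_spec hjm
    simpa using this
  have hmem : b j ∈ phi (encode c) 0 := by
    unfold phi
    rw [Denumerable.ofNat_encode, hc]
    exact Part.mem_map b hjm
  have hKC : KC (b j) ≤ encode c := Nat.sInf_le hmem
  have := hb j
  omega
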